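/- Let G be a finite simple graph on n vertices containing two vertex-disjoint edges, t ≥ 2, and let F = x_1^{a_1}⋯x_n^{a_n} be a monomial not contained in depol(P_t(Σ_t G)). Then deg F = Σ a_i ≤ (t−1)n − t. -/

import Mathlib

open MvPolynomial

/-- `p : Fin t → V` is a path on `t` vertices in the graph `H`. -/
def IsPathOn {V : Type*} (H : SimpleGraph V) {t : ℕ} (p : Fin t → V) : Prop :=
  Function.Injective p ∧
    ∀ (i : ℕ) (h : i + 1 < t), H.Adj (p ⟨i, by omega⟩) (p ⟨i + 1, h⟩)

/-- The `t`-path ideal of a graph. -/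
noncomputable def pathIdeal {V : Type*} (k : Type*) [CommRing k] (H : SimpleGraph V) (t : ℕ) :
    Ideal (MvPolynomial V k) :=
  Ideal.span { m | ∃ p : Fin t → V, IsPathOn H p ∧ m = ∏ i, X (p i) }

/-- The suspension `Σ_t G`: attach a path of length `t-1` to each vertex. -/
def suspension {V : Type*} (G : SimpleGraph V) (t : ℕ) : SimpleGraph (V ⊕ V × Fin (t - 1)) where
  Adj a b := match a, b with
    | .inl u, .inl v => G.Adj u v
    | .inl u, .inr (v, j) => u = v ∧ (j : ℕ) = 0
    | .inr (v, j), .inl u => u = v ∧ (j : ℕ) = 0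
    | .inr (u, i), .inr (v, j) => u = v ∧ ((i : ℕ) + 1 = j ∨ (j : ℕ) + 1 = i)
  symm := ⟨by
    rintro (u | ⟨u, i⟩) (v | ⟨v, j⟩) h
    · exact G.adj_symm h
    · exact h
    · exact h
    · exact ⟨h.1.symm, h.2.symm⟩⟩
  loopless := ⟨by
    rintro (u | ⟨u, i⟩) h
    · exact G.irrefl h
    · rcases h with ⟨-, h⟩; omega⟩

/-- The depolarization of the `t`-path ideal of `Σ_t G`, obtained by the substitution
`x_{ij} ↦ x_i`. -/
noncomputable def depolPathIdeal {V : Type*} (k : Type*) [CommRing k] (G : SimpleGraph V)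
    (t : ℕ) : Ideal (MvPolynomial V k) :=
  (pathIdeal k (suspension G t) t).map (rename (Sum.elim id Prod.fst))


section Aux
variable {k : Type*} [Field k] {n t : ℕ} {G : SimpleGraph (Fin n)}

lemma my_path_mem (p : Fin t → Fin n ⊕ Fin n × Fin (t - 1))
    (hp : IsPathOn (suspension G t) p) :
    (∏ i, X (Sum.elim id Prod.fst (p i)) : MvPolynomial (Fin n) k) ∈ depolPathIdeal k G t := by
  have h1 : (∏ i, X (p i) : MvPolynomial _ k) ∈ pathIdeal k (suspension G t) t :=
    Ideal.subset_span ⟨p, hp, rfl⟩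
  have h2 := Ideal.mem_map_of_mem (rename (Sum.elim id Prod.fst)) h1
  simpa [depolPathIdeal] using h2

lemma my_mono_mem {u s : Fin n →₀ ℕ} (hus : u ≤ s)
    (h : (monomial u (1 : k)) ∈ depolPathIdeal k G t) :
    (monomial s (1 : k)) ∈ depolPathIdeal k G t := by
  have : monomial s (1 : k) = monomial u 1 * monomial (s - u) 1 := by
    rw [monomial_mul, one_mul, add_tsub_cancel_of_le hus]
  rw [this]; exact Ideal.mul_mem_right _ _ h

lemma my_pow_mem (ht : 2 ≤ t) (i : Fin n) :
    ((X i : MvPolynomial (Fin n) k)) ^ t ∈ depolPathIdeal k G t := by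
  set p : Fin t → Fin n ⊕ Fin n × Fin (t - 1) := fun m =>
    if (m : ℕ) = 0 then Sum.inl i else Sum.inr (i, ⟨(m : ℕ) - 1, by omega⟩) with hpdef
  have hp : IsPathOn (suspension G t) p := by
    constructor
    · intro x y h
      simp only [hpdef] at h
      split_ifs at h with hx hy hy <;> simp at h <;> exact Fin.ext (by omega)
    · intro m hm
      simp only [hpdef]
      by_cases h0 : m = 0
      · subst h0
        simp only [if_pos rfl, if_neg (by omega : ¬ (1 : ℕ) = 0)]
        show (suspension G t).Adj (Sum.inl i) (Sum.inr (i, _))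
        exact ⟨rfl, rfl⟩
      · rw [if_neg h0, if_neg (by omega : ¬ (m + 1 : ℕ) = 0)]
        show (suspension G t).Adj (Sum.inr (i, _)) (Sum.inr (i, _))
        exact ⟨rfl, Or.inl (by simp; omega)⟩
  have := my_path_mem (k := k) p hp
  have heq : (∏ m, X (Sum.elim id Prod.fst (p m)) : MvPolynomial (Fin n) k) = (X i) ^ t := by
    have : ∀ m : Fin t, Sum.elim id Prod.fst (p m) = i := by
      intro m; simp only [hpdef]; split_ifs <;> rfl
    simp [this, Finset.prod_const]
  rwa [heq] at this

lemma my_edge_pow_mem (ht : 2 ≤ t) {i j : Fin n} (hij : G.Adj i j) {pp q : ℕ}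
    (hpq : pp + q = t) (hp1 : 1 ≤ pp) (hq1 : 1 ≤ q) :
    ((X i : MvPolynomial (Fin n) k)) ^ pp * (X j) ^ q ∈ depolPathIdeal k G t := by
  have hijne : i ≠ j := hij.ne
  set r : Fin t → Fin n ⊕ Fin n × Fin (t - 1) := fun m =>
    if (m : ℕ) + 1 < pp then Sum.inr (i, ⟨pp - (m : ℕ) - 2, by omega⟩)
    else if (m : ℕ) + 1 = pp then Sum.inl i
    else if (m : ℕ) = pp then Sum.inl j
    else Sum.inr (j, ⟨(m : ℕ) - pp - 1, by omega⟩) with hrdef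
  have hr : IsPathOn (suspension G t) r := by
    constructor
    · intro x y h
      simp only [hrdef] at h
      split_ifs at h <;>
        simp only [Sum.inr.injEq, Sum.inl.injEq, Prod.mk.injEq, Fin.mk.injEq] at h <;>
        first
        | (exact Fin.ext (by omega))
        | (exact absurd h hijne)
        | (exact absurd h.1 hijne)
        | (exact absurd h.1.symm hijne)
        | (exact absurd h hijne.symm)
    · intro m hm
      simp only [hrdef]
      by_cases c1 : m + 1 + 1 < pp
      · rw [if_pos (by omega : m + 1 < pp), if_pos (by omega : m + 1 + 1 < pp)]
        exact ⟨rfl, Or.inr (by simp; omega)⟩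
      by_cases c2 : m + 1 + 1 = pp
      · rw [if_pos (by omega : m + 1 < pp), if_neg (by omega : ¬ m + 1 + 1 < pp),
          if_pos (by omega : m + 1 + 1 = pp)]
        exact ⟨rfl, by simp; omega⟩
      by_cases c3 : m + 1 = pp
      · rw [if_neg (by omega : ¬ m + 1 < pp), if_pos c3,
          if_neg (by omega : ¬ m + 1 + 1 < pp), if_neg (by omega : ¬ m + 1 + 1 = pp),
          if_pos (by omega : m + 1 = pp)]
        exact hij
      by_cases c4 : m = pp
      · rw [if_neg (by omega : ¬ m + 1 < pp), if_neg (by omega : ¬ m + 1 = pp), if_pos c4,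
          if_neg (by omega : ¬ m + 1 + 1 < pp), if_neg (by omega : ¬ m + 1 + 1 = pp),
          if_neg (by omega : ¬ m + 1 = pp)]
        exact ⟨rfl, by simp; omega⟩
      · rw [if_neg (by omega : ¬ m + 1 < pp), if_neg (by omega : ¬ m + 1 = pp),
          if_neg c4, if_neg (by omega : ¬ m + 1 + 1 < pp),
          if_neg (by omega : ¬ m + 1 + 1 = pp), if_neg (by omega : ¬ m + 1 = pp)]
        exact ⟨rfl, Or.inl (by simp; omega)⟩
  have hmem := my_path_mem (k := k) r hr
  have hphi : ∀ m : Fin t, Sum.elim id Prod.fst (r m) = if (m : ℕ) < pp then i else j := by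
    intro m; simp only [hrdef]
    split_ifs <;> first | rfl | omega
  have heq : (∏ m, X (Sum.elim id Prod.fst (r m)) : MvPolynomial (Fin n) k)
      = (X i) ^ pp * (X j) ^ q := by
    have h1 : ∀ m : Fin t, (X (Sum.elim id Prod.fst (r m)) : MvPolynomial (Fin n) k)
        = (fun m : ℕ => if m < pp then (X i : MvPolynomial (Fin n) k) else X j) (m : ℕ) := by
      intro m; rw [hphi m]; simp [apply_ite (X : Fin n → MvPolynomial (Fin n) k)]
    calc (∏ m, X (Sum.elim id Prod.fst (r m)) : MvPolynomial (Fin n) k)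
        = ∏ m : Fin t, (fun m : ℕ => if m < pp then (X i : MvPolynomial (Fin n) k) else X j) (m : ℕ) :=
          Finset.prod_congr rfl (fun m _ => h1 m)
      _ = ∏ m ∈ Finset.range t, (if m < pp then (X i : MvPolynomial (Fin n) k) else X j) :=
          by exact Fin.prod_univ_eq_prod_range (fun m => if m < pp then (X i : MvPolynomial (Fin n) k) else X j) t
      _ = (X i) ^ pp * (X j) ^ q := by
          rw [← hpq, Finset.prod_range_add]
          congr 1
          · rw [Finset.prod_congr rfl (fun x hx => if_pos (Finset.mem_range.mp hx))]
            simp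
          · rw [Finset.prod_congr rfl (fun x hx => if_neg (by omega : ¬ pp + x < pp))]
            simp
  rwa [heq] at hmem

lemma my_mem_of_le (ht : 2 ≤ t) {s : Fin n →₀ ℕ} {i : Fin n} (h : t ≤ s i) :
    (monomial s (1 : k)) ∈ depolPathIdeal k G t := by
  have h1 : (Finsupp.single i t) ≤ s := Finsupp.single_le_iff.mpr h
  refine my_mono_mem h1 ?_
  rw [← X_pow_eq_monomial]
  exact my_pow_mem ht i

lemma my_mem_of_edge (ht : 2 ≤ t) {s : Fin n →₀ ℕ} {i j : Fin n} (hij : G.Adj i j)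
    (h : t ≤ s i + s j) : (monomial s (1 : k)) ∈ depolPathIdeal k G t := by
  by_cases hi : t ≤ s i
  · exact my_mem_of_le ht hi
  by_cases hj : t ≤ s j
  · exact my_mem_of_le ht hj
  push_neg at hi hj
  have hijne : i ≠ j := hij.ne
  have hu : Finsupp.single i (s i) + Finsupp.single j (t - s i) ≤ s := by
    rw [Finsupp.le_def]
    intro x
    simp only [Finsupp.add_apply, Finsupp.single_apply]
    rcases eq_or_ne x i with rfl | hxi
    · rw [if_pos rfl, if_neg (Ne.symm hijne)]
      omega
    · rcases eq_or_ne x j with rfl | hxj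
      · rw [if_neg hijne, if_pos rfl]
        omega
      · rw [if_neg (Ne.symm hxi), if_neg (Ne.symm hxj)]
        omega
  refine my_mono_mem hu ?_
  have heq : monomial (Finsupp.single i (s i) + Finsupp.single j (t - s i)) (1 : k)
      = X i ^ (s i) * X j ^ (t - s i) := by
    rw [X_pow_eq_monomial, X_pow_eq_monomial, monomial_mul, one_mul]
  rw [heq]
  exact my_edge_pow_mem ht hij (by omega) (by omega) (by omega)

end Aux

/-- If `G` contains two vertex-disjoint edges and `t ≥ 2`, then every monomial
`x_1^{a_1} ⋯ x_n^{a_n}` not in the depolarized `t`-path ideal of `Σ_t G` has degree at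
most `(t−1)n − t`. -/
theorem stmt10 {k : Type*} [Field k] {n : ℕ} (G : SimpleGraph (Fin n)) (t : ℕ) (ht : 2 ≤ t)
    (a b c d : Fin n) (h1 : G.Adj a b) (h2 : G.Adj c d)
    (hdisj : a ≠ c ∧ a ≠ d ∧ b ≠ c ∧ b ≠ d)
    (s : Fin n →₀ ℕ)
    (hF : (monomial s (1 : k)) ∉ depolPathIdeal k G t) :
    ((s.sum fun _ e => e : ℕ) : ℤ) ≤ ((t : ℤ) - 1) * (n : ℤ) - (t : ℤ) := by
  obtain ⟨hac, had, hbc, hbd⟩ := hdisj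
  have hab' : a ≠ b := h1.ne
  have hcd' : c ≠ d := h2.ne
  have hlt : ∀ i : Fin n, s i < t := by
    intro i
    by_contra h
    exact hF (my_mem_of_le ht (le_of_not_gt h))
  have hab : s a + s b < t := by
    by_contra h
    exact hF (my_mem_of_edge ht h1 (le_of_not_gt h))
  have hcd : s c + s d < t := by
    by_contra h
    exact hF (my_mem_of_edge ht h2 (le_of_not_gt h))
  have hsum : (s.sum fun _ e => e) = ∑ i, s i := Finsupp.sum_fintype _ _ (fun _ => rfl)
  set T : Finset (Fin n) := {a, b, c, d} with hT
  have hTcard : T.card = 4 := by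
    rw [hT, Finset.card_insert_of_notMem (by simp [hab', hac, had]),
      Finset.card_insert_of_notMem (by simp [hbc, hbd]),
      Finset.card_insert_of_notMem (by simp [hcd']), Finset.card_singleton]
  have hn4 : 4 ≤ n := by
    calc 4 = T.card := hTcard.symm
    _ ≤ (Finset.univ : Finset (Fin n)).card := Finset.card_le_univ T
    _ = n := by simp
  have hsplit : ∑ i, s i = ∑ i ∈ Finset.univ \ T, s i + ∑ i ∈ T, s i :=
    (Finset.sum_sdiff (Finset.subset_univ T)).symm
  have hTsum : ∑ i ∈ T, s i = s a + s b + s c + s d := by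
    rw [hT, Finset.sum_insert (by simp [hab', hac, had]),
      Finset.sum_insert (by simp [hbc, hbd]),
      Finset.sum_insert (by simp [hcd']), Finset.sum_singleton]
    ring
  have hcardsd : (Finset.univ \ T).card = n - 4 := by
    rw [Finset.card_sdiff_of_subset (Finset.subset_univ T), hTcard]
    simp
  have hrest : ∑ i ∈ Finset.univ \ T, s i ≤ (n - 4) * (t - 1) := by
    calc ∑ i ∈ Finset.univ \ T, s i ≤ (Finset.univ \ T).card • (t - 1) :=
          Finset.sum_le_card_nsmul _ _ _ (fun x _ => by have := hlt x; omega)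
    _ = (n - 4) * (t - 1) := by rw [hcardsd, smul_eq_mul]
  rw [hsum, hsplit, hTsum]
  have hcast : (((n - 4 : ℕ) : ℤ)) * (((t - 1 : ℕ)) : ℤ) = ((n : ℤ) - 4) * ((t : ℤ) - 1) := by
    rw [Nat.cast_sub hn4, Nat.cast_sub (by omega : 1 ≤ t)]
    norm_num
  have hrest' : ((∑ i ∈ Finset.univ \ T, s i : ℕ) : ℤ) ≤ ((n : ℤ) - 4) * ((t : ℤ) - 1) := by
    rw [← hcast]
    exact_mod_cast hrest
  have hab2 : ((s a : ℤ)) + (s b : ℤ) ≤ (t : ℤ) - 1 := by omega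
  have hcd2 : ((s c : ℤ)) + (s d : ℤ) ≤ (t : ℤ) - 1 := by omega
  have ht' : (2 : ℤ) ≤ t := by exact_mod_cast ht
  have hn4' : (4 : ℤ) ≤ n := by exact_mod_cast hn4
  have hexp : ((n : ℤ) - 4) * ((t : ℤ) - 1) = ((t : ℤ) - 1) * (n : ℤ) - 4 * ((t : ℤ) - 1) := by
    ring
  push_cast
  rw [hexp] at hrest'
  linarith
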